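/- Let û₂ > k satisfy: for all x ≥ û₂, (c − b·k)/(1 − a) < x + ln((x − k)/x²), and set ŵ₂ := (c − b·û₂)/(1 − a). Then there exists a positive number s > 0 such that for every (x,y) in the region Ê₂ = {(x,y) : k ≤ x ≤ û₂, y < ŵ₂}, at least one of the following three conditions holds: ȳ − y ≥ s, or f(x,y) ∉ Ê₂, or ȳ̄ − ȳ ≥ s, where (x̄, ȳ) := f(x,y) and (x̄̄, ȳ̄) := f(x̄, ȳ). -/

import Mathlib

set_option maxHeartbeats 1000000


/-- Moving upward in region `Ê₂`: there is a uniform positive speed `s` such that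
for every point of `Ê₂`, either `ȳ - y ≥ s`, or the image leaves `Ê₂`,
or `ȳ̄ - ȳ ≥ s`. -/
theorem chialvo_regionE2_speed
    (a b c k : ℝ)
    (ha : a ∈ Set.Ioo (0:ℝ) 1) (hb : b ∈ Set.Ioo (0:ℝ) 1)
    (hc : c ∈ Set.Ioo (0:ℝ) 1) (hk : 0 < k)
    (f : ℝ × ℝ → ℝ × ℝ)
    (hf : ∀ p : ℝ × ℝ,
      f p = (p.1 ^ 2 * Real.exp (p.2 - p.1) + k, a * p.2 - b * p.1 + c))
    (v : ℝ) (hv : v = (c - b * k) / (1 - a))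
    (u2 : ℝ) (hu2k : u2 > k)
    (hu2 : ∀ x ≥ u2, (c - b * k) / (1 - a) < x + Real.log ((x - k) / x ^ 2))
    (w2 : ℝ) (hw2 : w2 = (c - b * u2) / (1 - a))
    (E2 : Set (ℝ × ℝ))
    (hE2 : E2 = {p : ℝ × ℝ | k ≤ p.1 ∧ p.1 ≤ u2 ∧ p.2 < w2}) :
    ∃ s : ℝ, s > 0 ∧ ∀ p ∈ E2,
      (f p).2 - p.2 ≥ s ∨ f p ∉ E2 ∨ (f (f p)).2 - (f p).2 ≥ s := by
  obtain ⟨ha0, ha1⟩ := ha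
  obtain ⟨hb0, hb1⟩ := hb
  have h1a : (0:ℝ) < 1 - a := by linarith
  have huk : (0:ℝ) < u2 - k := by linarith
  have hu2pos : (0:ℝ) < u2 := by linarith
  obtain ⟨θ, hθdef⟩ : ∃ t : ℝ, t = u2 ^ 2 * Real.exp (w2 - u2) / (u2 - k) := ⟨_, rfl⟩
  have hθpos : 0 < θ := by rw [hθdef]; positivity
  have hw2' : w2 * (1 - a) = c - b * u2 := by rw [hw2]; field_simp
  -- w2 < v
  have hwv : w2 < (c - b * k) / (1 - a) := by
    rw [hw2, div_lt_div_iff_of_pos_right h1a]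
    nlinarith
  have hθ1 : θ < 1 := by
    have hG := hu2 u2 le_rfl
    have hlogpos : 0 < (u2 - k) / u2 ^ 2 := by positivity
    have hE : Real.exp (w2 - u2) < (u2 - k) / u2 ^ 2 := by
      rw [← Real.exp_log hlogpos]
      exact Real.exp_lt_exp.mpr (by linarith)
    rw [hθdef]; rw [div_lt_one huk]
    calc u2 ^ 2 * Real.exp (w2 - u2) < u2 ^ 2 * ((u2 - k) / u2 ^ 2) := by
          exact mul_lt_mul_of_pos_left hE (by positivity)
      _ = u2 - k := by field_simp
  obtain ⟨η, hηdef⟩ : ∃ t : ℝ, t = Real.log ((1 + θ) / (2 * θ)) := ⟨_, rfl⟩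
  have hηpos : 0 < η := hηdef ▸ Real.log_pos ((one_lt_div (by positivity)).mpr (by linarith))
  have hexpη : Real.exp η = (1 + θ) / (2 * θ) := hηdef ▸ Real.exp_log (by positivity)
  obtain ⟨δ, hδdef⟩ : ∃ t : ℝ, t = (1 - θ) * (u2 - k) / 2 := ⟨_, rfl⟩
  have hδpos : 0 < δ := by
    have h1θ : 0 < 1 - θ := by linarith
    rw [hδdef]; positivity
  obtain ⟨s, hsdef⟩ : ∃ t : ℝ, t = min (b * η) (b * δ) := ⟨_, rfl⟩
  refine ⟨s, hsdef ▸ lt_min (by positivity) (by positivity), ?_⟩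
  intro p hp
  rw [hE2] at hp
  obtain ⟨hx1, hx2, hy⟩ := hp
  by_cases hfp : f p ∈ E2
  · by_cases hA : (f p).2 - p.2 ≥ s
    · exact Or.inl hA
    by_cases hB : (f (f p)).2 - (f p).2 ≥ s
    · exact Or.inr (Or.inr hB)
    exfalso
    push_neg at hA hB
    have hfp1 : (f p).1 = p.1 ^ 2 * Real.exp (p.2 - p.1) + k := by rw [hf]
    have hfp2 : (f p).2 = a * p.2 - b * p.1 + c := by rw [hf]
    have hffp2 : (f (f p)).2 = a * (f p).2 - b * (f p).1 + c := by rw [hf (f p)]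
    rw [hE2] at hfp
    obtain ⟨hfx1, hfx2, hfy⟩ := hfp
    rw [hfp2] at hA
    rw [hffp2] at hB
    -- Step A : b * (u2 - p.1) < s
    have hxA : b * (u2 - p.1) < s := by
      nlinarith [mul_pos h1a (sub_pos.mpr hy)]
    -- Step B : b * (u2 - (f p).1) < s
    have hxB : b * (u2 - (f p).1) < s := by
      nlinarith [mul_pos h1a (sub_pos.mpr hfy)]
    have hsη : s ≤ b * η := hsdef ▸ min_le_left _ _
    have hsδ : s ≤ b * δ := hsdef ▸ min_le_right _ _
    -- x is within η of u2
    have hxη : u2 - p.1 < η := by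
      have := lt_of_lt_of_le hxA hsη
      exact (mul_lt_mul_iff_right₀ hb0).mp this
    -- bound x̄ away from u2
    have hbound : (f p).1 ≤ u2 - δ := by
      rw [hfp1]
      have e1 : Real.exp (p.2 - p.1) ≤ Real.exp (w2 - u2) * Real.exp η := by
        rw [← Real.exp_add]
        exact Real.exp_le_exp.mpr (by linarith)
      have e2 : p.1 ^ 2 ≤ u2 ^ 2 := by nlinarith
      have e3 : p.1 ^ 2 * Real.exp (p.2 - p.1)
          ≤ u2 ^ 2 * (Real.exp (w2 - u2) * Real.exp η) :=
        mul_le_mul e2 e1 (Real.exp_pos _).le (by positivity)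
      have e4 : u2 ^ 2 * Real.exp (w2 - u2) = θ * (u2 - k) := by
        rw [hθdef]; field_simp
      have e5 : u2 ^ 2 * (Real.exp (w2 - u2) * Real.exp η)
          = (1 + θ) * (u2 - k) / 2 := by
        rw [hexpη, show u2 ^ 2 * (Real.exp (w2 - u2) * ((1 + θ) / (2 * θ)))
            = (u2 ^ 2 * Real.exp (w2 - u2)) * ((1 + θ) / (2 * θ)) by ring, e4]
        field_simp
      rw [hδdef]
      nlinarith [e3, e5]
    -- contradiction
    have := lt_of_lt_of_le hxB hsδ
    have : u2 - (f p).1 < δ := (mul_lt_mul_iff_right₀ hb0).mp this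
    linarith
  · exact Or.inr (Or.inl hfp)
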